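/- Fix (p,q) ∈ ℝ² and a nonzero spinor Ψ ∈ Δ₇⁰. Then there is no parameter vector ω ∈ S(p,q,Ψ) satisfying both constraints T(ω)·Ψ = 0 and F(ω)·Ψ = 0 simultaneously. -/

import Mathlib

open Matrix

/-- A coordinate `k`-tensor on `ℝⁿ`: the values on `k`-tuples of standard basis vectors. -/
abbrev Tensor (n k : ℕ) := (Fin k → Fin n) → ℝ

/-- The tensor is alternating, i.e. it is the coordinate expression of an alternating
`k`-form on `ℝⁿ`. -/
def IsAlt {n k : ℕ} (ω : Tensor n k) : Prop :=
  ∀ (f : Fin k → Fin n) (σ : Equiv.Perm (Fin k)),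
    ω (f ∘ σ) = ((Equiv.Perm.sign σ : ℤ) : ℝ) * ω f

/-- The Clifford relations `γᵢγⱼ + γⱼγᵢ = -2 δᵢⱼ 𝟙`. -/
def CliffordRel {n N : ℕ} (γ : Fin n → Matrix (Fin N) (Fin N) ℝ) : Prop :=
  ∀ i j, γ i * γ j + γ j * γ i =
    if i = j then (-2 : ℝ) • (1 : Matrix (Fin N) (Fin N) ℝ) else 0

/-- Clifford action of a vector `X = Σ xᵢ eᵢ`: `γ(X) = Σ xᵢ γᵢ`. -/
noncomputable def gam {n N : ℕ} (γ : Fin n → Matrix (Fin N) (Fin N) ℝ)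
    (X : Fin n → ℝ) : Matrix (Fin N) (Fin N) ℝ :=
  ∑ i, X i • γ i

/-- Clifford action of an (alternating) `k`-form:
`ρ(ω) = Σ_{i₁<⋯<i_k} ω(e_{i₁},…,e_{i_k}) γ_{i₁}⋯γ_{i_k}`, written here as the
full sum over all tuples divided by `k!` (for alternating `ω` and `γ` satisfying the
Clifford relations the two expressions agree). -/
noncomputable def rho {n N : ℕ} (γ : Fin n → Matrix (Fin N) (Fin N) ℝ) {k : ℕ}
    (ω : Tensor n k) : Matrix (Fin N) (Fin N) ℝ :=
  (k.factorial : ℝ)⁻¹ • ∑ f : Fin k → Fin n, ω f • (List.ofFn fun i => γ (f i)).prod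

/-- Interior product `X ⌟ ω` in coordinates: `(X⌟ω)(Y₁,…,Y_{k}) = ω(X,Y₁,…,Y_{k})`. -/
noncomputable def inter {n k : ℕ} (X : Fin n → ℝ) (ω : Tensor n (k + 1)) : Tensor n k :=
  fun g => ∑ j, X j * ω (Fin.cons j g)

/-- Exterior product `X ∧ ω` in coordinates (identifying `X` with a `1`-form via the
standard inner product): `(X∧ω)(Y₀,…,Y_k) = Σ_j (-1)^j ⟨X,Y_j⟩ ω(Y₀,…,Ŷ_j,…,Y_k)`. -/
noncomputable def wedge {n k : ℕ} (X : Fin n → ℝ) (ω : Tensor n k) : Tensor n (k + 1) :=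
  fun h => ∑ j : Fin (k + 1), (-1 : ℝ) ^ (j : ℕ) * X (h j) * ω fun i => h (j.succAbove i)

/-- The elementary form `e_{v 0} ∧ ⋯ ∧ e_{v (k-1)}` in coordinates. -/
noncomputable def elem {n k : ℕ} (v : Fin k → Fin n) : Tensor n k :=
  fun f => Matrix.det (Matrix.of fun i j => if v i = f j then (1 : ℝ) else 0)

/-! ### The `SU(2)`-invariant families of `3`- and `4`-forms on `ℝ⁷`
(indices are `0`-based: `e₁ = E7 0, …, e₇ = E7 6`). -/

/-- The standard basis vectors of `ℝ⁷`. -/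
noncomputable def E7 (i : Fin 7) : Fin 7 → ℝ := Pi.single i 1

/-- `de₁ = e₃₅ + e₄₆`, `de₂ = e₄₅ - e₃₆`, `de₇ = e₃₄ - e₅₆`. -/
noncomputable def de : Fin 3 → Tensor 7 2 :=
  ![elem ![2, 4] + elem ![3, 5], elem ![3, 4] - elem ![2, 5], elem ![2, 3] - elem ![4, 5]]

/-- The distinguished indices `1, 2, 7` (0-based: `0, 1, 6`). -/
def idx : Fin 3 → Fin 7 := ![0, 1, 6]

/-- The distinguished index pairs `(1,2), (1,7), (2,7)` (0-based). -/
def pf : Fin 3 → Fin 7 × Fin 7 := ![(0, 1), (0, 6), (1, 6)]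

/-- The 20-dimensional parameter space
`ω = ((t_{ij}), t, (f_{ijk}), f) ∈ ℝ⁹ × ℝ × ℝ⁹ × ℝ ≅ ℝ²⁰`. -/
abbrev Param20 := (Fin 3 → Fin 3 → ℝ) × ℝ × (Fin 3 → Fin 3 → ℝ) × ℝ

/-- The invariant `3`-form `T(ω) = Σ t_{ij} eᵢ ∧ deⱼ + t e₁∧e₂∧e₇`. -/
noncomputable def Tform (ω : Param20) : Tensor 7 3 :=
  (∑ i : Fin 3, ∑ j : Fin 3, ω.1 i j • wedge (E7 (idx i)) (de j))
    + ω.2.1 • elem ![0, 1, 6]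

/-- The invariant `4`-form `F(ω) = Σ f_{ijk} eᵢ ∧ eⱼ ∧ deₖ + f e₃∧e₄∧e₅∧e₆`. -/
noncomputable def Fform (ω : Param20) : Tensor 7 4 :=
  (∑ i : Fin 3, ∑ j : Fin 3,
      ω.2.2.1 i j • wedge (E7 (pf i).1) (wedge (E7 (pf i).2) (de j)))
    + ω.2.2.2 • elem ![2, 3, 4, 5]

/-- Membership in `Δ₇⁰`, the common kernel of `γ₃γ₄+γ₅γ₆`, `γ₃γ₅-γ₄γ₆`, `γ₃γ₆+γ₄γ₅`. -/
def InDelta0 (γ : Fin 7 → Matrix (Fin 8) (Fin 8) ℝ) (Ψ : Fin 8 → ℝ) : Prop :=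
  (γ 2 * γ 3 + γ 4 * γ 5).mulVec Ψ = 0 ∧
    (γ 2 * γ 4 - γ 3 * γ 5).mulVec Ψ = 0 ∧
    (γ 2 * γ 5 + γ 3 * γ 4).mulVec Ψ = 0

/-- The solution set `S(p,q,Ψ) ⊆ ℝ²⁰` of the algebraic Killing equation
`(1/2)XΨ + (1/4)(X⌟T(ω))Ψ + p (X⌟F(ω))Ψ + q (X∧F(ω))Ψ = 0` for all `X`. -/
def KillingSet (γ : Fin 7 → Matrix (Fin 8) (Fin 8) ℝ) (p q : ℝ) (Ψ : Fin 8 → ℝ) :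
    Set Param20 :=
  {ω | ∀ X : Fin 7 → ℝ,
    (1 / 2 : ℝ) • (gam γ X).mulVec Ψ
      + (1 / 4 : ℝ) • (rho γ (inter X (Tform ω))).mulVec Ψ
      + p • (rho γ (inter X (Fform ω))).mulVec Ψ
      + q • (rho γ (wedge X (Fform ω))).mulVec Ψ = 0}


section Aux

variable {n N : ℕ} (γ : Fin n → Matrix (Fin N) (Fin N) ℝ)

/-- Product of the gamma matrices along a tuple of indices. -/
noncomputable def Pm {k : ℕ} (g : Fin k → Fin n) : Matrix (Fin N) (Fin N) ℝ :=
  (List.ofFn fun i => γ (g i)).prod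

lemma rho_eq {k : ℕ} (ω : Tensor n k) :
    rho γ ω = (k.factorial : ℝ)⁻¹ • ∑ f, ω f • Pm γ f := rfl

lemma Pm_cons {k : ℕ} (i : Fin n) (g : Fin k → Fin n) :
    Pm γ (Fin.cons i g) = γ i * Pm γ g := by
  unfold Pm
  rw [List.ofFn_succ]
  simp [List.prod_cons]

lemma gam_single (i : Fin n) : gam γ (Pi.single i 1) = γ i := by
  unfold gam
  rw [Finset.sum_eq_single i]
  · simp
  · intro b _ hb; simp [Pi.single_eq_of_ne hb]
  · simp

lemma gam_sq (hγ : CliffordRel γ) (a : Fin n) : γ a * γ a = (-1 : ℝ) • 1 := by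
  have h := hγ a a
  rw [if_pos rfl] at h
  have h2 : (2:ℝ) • (γ a * γ a) = (-2:ℝ) • 1 := by rw [two_smul]; exact h
  calc γ a * γ a = (2:ℝ)⁻¹ • ((2:ℝ) • (γ a * γ a)) := by rw [smul_smul]; norm_num
  _ = (2:ℝ)⁻¹ • ((-2:ℝ) • (1 : Matrix (Fin N) (Fin N) ℝ)) := by rw [h2]
  _ = (-1:ℝ) • 1 := by rw [smul_smul]; norm_num

lemma inter_single {k : ℕ} (i : Fin n) (ω : Tensor n (k+1)) (g : Fin k → Fin n) :
    inter (Pi.single i 1) ω g = ω (Fin.cons i g) := by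
  unfold inter
  rw [Finset.sum_eq_single i]
  · simp
  · intro b _ hb; simp [Pi.single_eq_of_ne hb]
  · simp

lemma sum_gam_mul_rho_inter {k : ℕ} (ω : Tensor n (k+1)) :
    ∑ i, γ i * rho γ (inter (Pi.single i 1) ω) = (((k+1 : ℕ)) : ℝ) • rho γ ω := by
  have h1 : ∀ i : Fin n, γ i * rho γ (inter (Pi.single i 1) ω)
      = (k.factorial : ℝ)⁻¹ • ∑ g : Fin k → Fin n, ω (Fin.cons i g) • Pm γ (Fin.cons i g) := by
    intro i
    rw [rho_eq, Matrix.mul_smul]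
    congr 1
    rw [Finset.mul_sum]
    refine Finset.sum_congr rfl fun g _ => ?_
    rw [inter_single, Matrix.mul_smul, Pm_cons]
  simp only [h1]
  rw [← Finset.smul_sum]
  have h2 : ∑ i : Fin n, ∑ g : Fin k → Fin n, ω (Fin.cons i g) • Pm γ (Fin.cons i g)
      = ∑ f : Fin (k+1) → Fin n, ω f • Pm γ f := by
    refine Eq.trans (Fintype.sum_prod_type
      (f := fun p : Fin n × (Fin k → Fin n) => ω (Fin.cons p.1 p.2) • Pm γ (Fin.cons p.1 p.2))).symm ?_
    exact Fintype.sum_equiv (Fin.consEquiv fun _ => Fin n) _ _ (fun p => rfl)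
  rw [h2, rho_eq, smul_smul]
  congr 1
  rw [Nat.factorial_succ]
  have hk : (k.factorial : ℝ) ≠ 0 := Nat.cast_ne_zero.mpr k.factorial_ne_zero
  push_cast
  field_simp

lemma sum_smul_Pm_comp {k : ℕ} {ω : Tensor n k} (hω : IsAlt ω) (σ : Equiv.Perm (Fin k)) :
    ∑ g : Fin k → Fin n, ω g • Pm γ (g ∘ σ)
      = ((Equiv.Perm.sign σ : ℤ) : ℝ) • ∑ g : Fin k → Fin n, ω g • Pm γ g := by
  have step1 : ∑ g : Fin k → Fin n, ω g • Pm γ (g ∘ σ)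
      = ∑ g : Fin k → Fin n, ω (g ∘ ⇑σ⁻¹) • Pm γ g := by
    have hc := Equiv.sum_comp (Equiv.arrowCongr σ.symm (Equiv.refl (Fin n)))
      (fun h => ω (h ∘ ⇑σ⁻¹) • Pm γ h)
    rw [← hc]
    refine Finset.sum_congr rfl fun g _ => ?_
    have e1 : (Equiv.arrowCongr σ.symm (Equiv.refl (Fin n))) g = g ∘ ⇑σ := rfl
    rw [e1]
    have e2 : (g ∘ ⇑σ) ∘ ⇑σ⁻¹ = g := by funext x; simp
    rw [e2]
  rw [step1]
  have step2 : ∀ g : Fin k → Fin n, ω (g ∘ ⇑σ⁻¹) = ((Equiv.Perm.sign σ : ℤ) : ℝ) * ω g := by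
    intro g
    rw [hω g σ⁻¹, Equiv.Perm.sign_inv]
  simp only [step2, ← smul_smul]
  rw [← Finset.smul_sum]



lemma ofFn_cons' {α : Type*} {k : ℕ} (x : α) (f : Fin k → α) :
    List.ofFn (Fin.cons (α := fun _ => α) x f) = x :: List.ofFn f := by
  rw [List.ofFn_succ]
  simp

lemma ofFn_insertNth' {α : Type*} : ∀ {k : ℕ} (j : Fin (k+1)) (a : α) (g : Fin k → α),
    List.ofFn (j.insertNth a g) = ((List.ofFn g).take (j:ℕ)) ++ a :: ((List.ofFn g).drop (j:ℕ)) := by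
  intro k
  induction k with
  | zero =>
    intro j a g
    have hj : j = 0 := Fin.fin_one_eq_zero j
    subst hj
    simp [Fin.insertNth_zero', List.ofFn_succ]
  | succ k ih =>
    intro j a g
    cases j using Fin.cases with
    | zero => simp [Fin.insertNth_zero', List.ofFn_succ]
    | succ j' =>
      have key : (j'.succ).insertNth a g = Fin.cons (α := fun _ => α) (g 0) (Fin.insertNth (α := fun _ => α) j' a (g ∘ Fin.succ)) := by
        funext m
        cases m using Fin.cases with
        | zero =>
          rw [Fin.cons_zero]
          have h0 : (0 : Fin (k+2)) = (j'.succ).succAbove 0 := (Fin.succ_succAbove_zero j').symm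
          rw [h0, Fin.insertNth_apply_succAbove]
        | succ m' =>
          rw [Fin.cons_succ]
          refine Fin.succAboveCases j' ?_ ?_ m'
          · rw [Fin.insertNth_apply_same, Fin.insertNth_apply_same]
          · intro i
            rw [← Fin.succ_succAbove_succ, Fin.insertNth_apply_succAbove,
              Fin.insertNth_apply_succAbove]
            rfl
      rw [key, ofFn_cons', ih, List.ofFn_succ (f := g), Fin.val_succ,
        List.take_succ_cons, List.drop_succ_cons]
      rfl

lemma ofFn_comp_cycleRange_inv {α : Type*} {k : ℕ} (jf : Fin (k+1)) (g : Fin (k+1) → α) :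
    List.ofFn (fun m => g ((jf.cycleRange⁻¹ : Equiv.Perm (Fin (k+1))) m))
      = g jf :: (((List.ofFn g).take (jf:ℕ)) ++ ((List.ofFn g).drop ((jf:ℕ)+1))) := by
  have hj : (jf : ℕ) < k + 1 := jf.isLt
  apply List.ext_getElem
  · simp only [List.length_ofFn, List.length_cons, List.length_append, List.length_take,
      List.length_drop]
    omega
  · intro m hm1 hm2
    simp only [List.length_ofFn] at hm1
    rw [List.getElem_ofFn]
    match m, hm1 with
    | 0, _ =>
      have hc : (jf.cycleRange⁻¹ : Equiv.Perm (Fin (k+1))) 0 = jf := by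
        have : jf.cycleRange jf = 0 := Fin.cycleRange_self jf
        rw [← this]
        exact Equiv.symm_apply_apply _ _
      rw [List.getElem_cons_zero, show (⟨0, by omega⟩ : Fin (k+1)) = 0 from Fin.ext (by simp), hc]
    | (m' + 1), hm1 =>
      rw [List.getElem_cons_succ]
      by_cases hlt : m' < (jf : ℕ)
      · -- c ⟨m'+1⟩ = ⟨m'⟩
        have hmk : m' < k + 1 := by omega
        have hstep : jf.cycleRange ⟨m', hmk⟩ = ⟨m' + 1, hm1⟩ := by
          apply Fin.ext
          rw [Fin.coe_cycleRange_of_lt]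
          exact hlt
        have hc : (jf.cycleRange⁻¹ : Equiv.Perm (Fin (k+1))) ⟨m' + 1, hm1⟩ = ⟨m', hmk⟩ := by
          rw [← hstep]; exact Equiv.symm_apply_apply _ _
        have harr : m' < (List.take (jf:ℕ) (List.ofFn g)).length := by
          simp only [List.length_take, List.length_ofFn]
          omega
        rw [List.getElem_append_left harr]
        rw [List.getElem_take]
        rw [List.getElem_ofFn]
        rw [hc]
      · -- c ⟨m'+1⟩ = ⟨m'+1⟩
        have hgt : jf < (⟨m' + 1, hm1⟩ : Fin (k+1)) := by
          rw [Fin.lt_def]; simp; omega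
        have hfix : jf.cycleRange ⟨m' + 1, hm1⟩ = ⟨m' + 1, hm1⟩ :=
          Fin.cycleRange_of_gt hgt
        have hc : (jf.cycleRange⁻¹ : Equiv.Perm (Fin (k+1))) ⟨m' + 1, hm1⟩ = ⟨m' + 1, hm1⟩ := by
          nth_rewrite 1 [← hfix]; exact Equiv.symm_apply_apply _ _
        have harr : (List.take (jf:ℕ) (List.ofFn g)).length ≤ m' := by
          simp only [List.length_take, List.length_ofFn]
          omega
        rw [List.getElem_append_right harr]
        rw [List.getElem_drop]
        rw [List.getElem_ofFn]
        rw [hc]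
        congr 1
        apply Fin.ext
        simp only [List.length_take, List.length_ofFn]
        omega

variable {n N : ℕ} (γ : Fin n → Matrix (Fin N) (Fin N) ℝ)

lemma V_formula {k : ℕ} (hγ : CliffordRel γ) {ω : Tensor n k} (hω : IsAlt ω) :
    ∀ j : ℕ, j ≤ k →
    (∑ g : Fin k → Fin n, ∑ a : Fin n,
      ω g • (γ a * (((List.ofFn fun m => γ (g m)).take j).prod *
        (γ a * ((List.ofFn fun m => γ (g m)).drop j).prod))))
    = ((-1:ℝ)^j * (2*(j:ℝ) - (n:ℝ))) • ∑ g : Fin k → Fin n, ω g • Pm γ g := by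
  intro j
  induction j with
  | zero =>
    intro _
    have hint : ∀ (g : Fin k → Fin n) (a : Fin n),
        ω g • (γ a * (((List.ofFn fun m => γ (g m)).take 0).prod *
          (γ a * ((List.ofFn fun m => γ (g m)).drop 0).prod)))
        = (-(1:ℝ)) • (ω g • Pm γ g) := by
      intro g a
      rw [List.take_zero, List.drop_zero, List.prod_nil, one_mul, ← Matrix.mul_assoc,
        gam_sq γ hγ a, Matrix.smul_mul, Matrix.one_mul, smul_comm]
      rfl
    simp only [hint, Finset.sum_const, Finset.card_univ, Fintype.card_fin]
    have hn : ∀ x : Matrix (Fin N) (Fin N) ℝ,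
        n • ((-(1:ℝ)) • x) = ((-1:ℝ)^0 * (2*((0:ℕ):ℝ) - (n:ℝ))) • x := by
      intro x
      rw [← Nat.cast_smul_eq_nsmul ℝ, smul_smul]
      norm_num
    simp only [hn]
    rw [← Finset.smul_sum]
  | succ j ihj =>
    intro hj1
    have hjk : j < k := hj1
    obtain ⟨k', rfl⟩ : ∃ k', k = k' + 1 := ⟨k - 1, by omega⟩
    set jf : Fin (k' + 1) := ⟨j, hjk⟩ with hjf
    have hlen : ∀ g : Fin (k'+1) → Fin n,
        (List.ofFn fun m => γ (g m) : List (Matrix (Fin N) (Fin N) ℝ)).length = k' + 1 := by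
      intro g; simp
    have hjlen : ∀ g : Fin (k'+1) → Fin n,
        j < (List.ofFn fun m => γ (g m) : List (Matrix (Fin N) (Fin N) ℝ)).length := by
      intro g; rw [hlen]; omega
    have hget : ∀ g : Fin (k'+1) → Fin n,
        (List.ofFn fun m => γ (g m))[j]'(hjlen g) = γ (g jf) := by
      intro g; rw [List.getElem_ofFn]
    have htake : ∀ g : Fin (k'+1) → Fin n,
        (List.ofFn fun m => γ (g m)).take (j+1)
          = (List.ofFn fun m => γ (g m)).take j ++ [γ (g jf)] := by
      intro g
      rw [← List.take_concat_get' _ j (hjlen g), hget]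
    have hdrop : ∀ g : Fin (k'+1) → Fin n,
        (List.ofFn fun m => γ (g m)).drop j
          = γ (g jf) :: (List.ofFn fun m => γ (g m)).drop (j+1) := by
      intro g
      rw [List.drop_eq_getElem_cons (hjlen g), hget]
    have key : ∀ (g : Fin (k'+1) → Fin n) (a : Fin n),
        ω g • (γ a * (((List.ofFn fun m => γ (g m)).take (j+1)).prod *
          (γ a * ((List.ofFn fun m => γ (g m)).drop (j+1)).prod)))
        = (ω g • (γ a * (((List.ofFn fun m => γ (g m)).take j).prod *
            ((if g jf = a then (-2:ℝ) • (1 : Matrix (Fin N) (Fin N) ℝ) else 0) *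
              ((List.ofFn fun m => γ (g m)).drop (j+1)).prod))))
          - ω g • (γ a * (((List.ofFn fun m => γ (g m)).take j).prod *
              (γ a * ((List.ofFn fun m => γ (g m)).drop j).prod))) := by
      intro g a
      rw [htake g, hdrop g, List.prod_append, List.prod_singleton, List.prod_cons]
      rw [← smul_sub]
      congr 1
      have hrel : γ (g jf) * γ a
          = (if g jf = a then (-2:ℝ) • (1 : Matrix (Fin N) (Fin N) ℝ) else 0) - γ a * γ (g jf) :=
        eq_sub_of_add_eq (hγ _ _)
      rw [Matrix.mul_assoc ((List.ofFn fun m => γ (g m)).take j).prod (γ (g jf)) _,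
        ← Matrix.mul_assoc (γ (g jf)) (γ a) _, hrel]
      rw [Matrix.sub_mul, Matrix.mul_sub, Matrix.mul_sub, Matrix.mul_assoc (γ a) (γ (g jf))]
    simp only [key]
    rw [Finset.sum_congr rfl (fun g _ => Finset.sum_sub_distrib _ _), Finset.sum_sub_distrib]
    have hX : ∑ g : Fin (k'+1) → Fin n, ∑ a : Fin n,
        ω g • (γ a * (((List.ofFn fun m => γ (g m)).take j).prod *
          ((if g jf = a then (-2:ℝ) • (1 : Matrix (Fin N) (Fin N) ℝ) else 0) *
            ((List.ofFn fun m => γ (g m)).drop (j+1)).prod)))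
        = ((-2:ℝ) * (-1:ℝ)^j) • ∑ g : Fin (k'+1) → Fin n, ω g • Pm γ g := by
      have hinner : ∀ g : Fin (k'+1) → Fin n, ∑ a : Fin n,
          ω g • (γ a * (((List.ofFn fun m => γ (g m)).take j).prod *
            ((if g jf = a then (-2:ℝ) • (1 : Matrix (Fin N) (Fin N) ℝ) else 0) *
              ((List.ofFn fun m => γ (g m)).drop (j+1)).prod)))
          = (-2:ℝ) • (ω g • (γ (g jf) * (((List.ofFn fun m => γ (g m)).take j).prod *
              ((List.ofFn fun m => γ (g m)).drop (j+1)).prod))) := by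
        intro g
        rw [Finset.sum_eq_single (g jf)]
        · rw [if_pos rfl, Matrix.smul_mul, Matrix.one_mul, Matrix.mul_smul, Matrix.mul_smul,
            smul_comm]
        · intro b _ hb
          rw [if_neg (Ne.symm hb), Matrix.zero_mul, Matrix.mul_zero, Matrix.mul_zero, smul_zero]
        · intro hmem; exact absurd (Finset.mem_univ _) hmem
      simp only [hinner]
      rw [← Finset.smul_sum]
      have hPc : ∀ g : Fin (k'+1) → Fin n,
          γ (g jf) * (((List.ofFn fun m => γ (g m)).take j).prod *
            ((List.ofFn fun m => γ (g m)).drop (j+1)).prod)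
          = Pm γ (g ∘ ⇑(jf.cycleRange⁻¹ : Equiv.Perm (Fin (k'+1)))) := by
        intro g
        unfold Pm
        have hl := ofFn_comp_cycleRange_inv jf (fun m => γ (g m))
        have : (List.ofFn fun m => γ ((g ∘ ⇑(jf.cycleRange⁻¹ : Equiv.Perm (Fin (k'+1)))) m))
            = List.ofFn (fun m => (fun m' => γ (g m')) ((jf.cycleRange⁻¹ : Equiv.Perm (Fin (k'+1))) m)) := rfl
        rw [this, hl, List.prod_cons, List.prod_append]
      have hsum2 : ∑ g : Fin (k'+1) → Fin n,
          ω g • (γ (g jf) * (((List.ofFn fun m => γ (g m)).take j).prod *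
            ((List.ofFn fun m => γ (g m)).drop (j+1)).prod))
          = ((-1:ℝ)^j) • ∑ g : Fin (k'+1) → Fin n, ω g • Pm γ g := by
        rw [Finset.sum_congr rfl fun g _ => congrArg (fun x => ω g • x) (hPc g)]
        rw [sum_smul_Pm_comp γ hω]
        congr 1
        rw [Equiv.Perm.sign_inv, Fin.sign_cycleRange]
        have hv : (jf : ℕ) = j := rfl
        rw [hv]
        simp [Units.val_pow_eq_pow_val]
      rw [hsum2, smul_smul]
    rw [hX, ihj (by omega)]
    rw [← sub_smul]
    congr 1
    push_cast
    ring

lemma comp_insertNth' {α β : Type*} {k : ℕ} (f : α → β) (j : Fin (k+1)) (a : α) (g : Fin k → α) :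
    (fun m => f (Fin.insertNth (α := fun _ => α) j a g m))
      = Fin.insertNth (α := fun _ => β) j (f a) (fun m => f (g m)) := by
  funext m
  refine Fin.succAboveCases j ?_ ?_ m
  · rw [Fin.insertNth_apply_same, Fin.insertNth_apply_same]
  · intro i
    rw [Fin.insertNth_apply_succAbove, Fin.insertNth_apply_succAbove]

lemma sum_lin (n k : ℕ) : ∑ jj : Fin (k+1), (2*((jj:ℕ):ℝ) - (n:ℝ)) = ((k:ℝ)+1) * ((k:ℝ) - (n:ℝ)) := by
  induction k with
  | zero => simp
  | succ k ih =>
    rw [Fin.sum_univ_castSucc]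
    simp only [Fin.coe_castSucc, Fin.val_last]
    rw [ih]
    push_cast
    ring

lemma sum_gam_mul_rho_wedge {k : ℕ} (hγ : CliffordRel γ) {ω : Tensor n k} (hω : IsAlt ω) :
    ∑ i, γ i * rho γ (wedge (Pi.single i 1) ω) = ((k : ℝ) - (n : ℝ)) • rho γ ω := by
  have hfk : (k.factorial : ℝ) ≠ 0 := Nat.cast_ne_zero.mpr k.factorial_ne_zero
  have h1 : ∀ i : Fin n, γ i * rho γ (wedge (Pi.single i 1) ω)
      = ((k+1).factorial : ℝ)⁻¹ • ∑ h : Fin (k+1) → Fin n, ∑ jj : Fin (k+1),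
          ((-1:ℝ)^(jj:ℕ) * (Pi.single i (1:ℝ) : Fin n → ℝ) (h jj) * ω (fun m => h (jj.succAbove m)))
            • (γ i * Pm γ h) := by
    intro i
    rw [rho_eq, Matrix.mul_smul, Finset.mul_sum]
    congr 1
    refine Finset.sum_congr rfl fun h _ => ?_
    rw [Matrix.mul_smul]
    unfold wedge
    rw [Finset.sum_smul]
  simp only [h1]
  rw [← Finset.smul_sum]
  have e1 : ∀ (h : Fin (k+1) → Fin n) (jj : Fin (k+1)),
      (∑ i : Fin n, ((-1:ℝ)^(jj:ℕ) * (Pi.single i (1:ℝ) : Fin n → ℝ) (h jj)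
          * ω (fun m => h (jj.succAbove m))) • (γ i * Pm γ h))
      = ((-1:ℝ)^(jj:ℕ) * ω (fun m => h (jj.succAbove m))) • (γ (h jj) * Pm γ h) := by
    intro h jj
    rw [Finset.sum_eq_single (h jj)]
    · rw [Pi.single_eq_same, mul_one]
    · intro b _ hb
      rw [Pi.single_eq_of_ne (Ne.symm hb), mul_zero, zero_mul, zero_smul]
    · intro hmem; exact absurd (Finset.mem_univ _) hmem
  have h2 : (∑ i : Fin n, ∑ h : Fin (k+1) → Fin n, ∑ jj : Fin (k+1),
        ((-1:ℝ)^(jj:ℕ) * (Pi.single i (1:ℝ) : Fin n → ℝ) (h jj) * ω (fun m => h (jj.succAbove m)))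
          • (γ i * Pm γ h))
      = ∑ jj : Fin (k+1), ∑ h : Fin (k+1) → Fin n,
          ((-1:ℝ)^(jj:ℕ) * ω (fun m => h (jj.succAbove m))) • (γ (h jj) * Pm γ h) := by
    rw [Finset.sum_comm]
    rw [Finset.sum_congr rfl fun h _ => Finset.sum_comm]
    rw [Finset.sum_comm]
    refine Finset.sum_congr rfl fun jj _ => Finset.sum_congr rfl fun h _ => e1 h jj
  rw [h2]
  have h4 : ∀ jj : Fin (k+1),
      (∑ h : Fin (k+1) → Fin n,
        ((-1:ℝ)^(jj:ℕ) * ω (fun m => h (jj.succAbove m))) • (γ (h jj) * Pm γ h))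
      = ((-1:ℝ)^(jj:ℕ) * ((-1:ℝ)^(jj:ℕ) * (2*((jj:ℕ):ℝ) - (n:ℝ))))
          • ∑ g : Fin k → Fin n, ω g • Pm γ g := by
    intro jj
    have happ : ∀ p : Fin n × (Fin k → Fin n),
        (Fin.insertNthEquiv (fun _ => Fin n) jj) p = Fin.insertNth (α := fun _ => Fin n) jj p.1 p.2 := fun p => rfl
    have e2 : ∀ p : Fin n × (Fin k → Fin n),
        ((-1:ℝ)^(jj:ℕ) * ω (fun m => (Fin.insertNth (α := fun _ => Fin n) jj p.1 p.2) (jj.succAbove m)))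
          • (γ ((Fin.insertNth (α := fun _ => Fin n) jj p.1 p.2) jj) * Pm γ (Fin.insertNth (α := fun _ => Fin n) jj p.1 p.2))
        = (-1:ℝ)^(jj:ℕ) • (ω p.2 • (γ p.1 *
            (((List.ofFn fun m => γ (p.2 m)).take (jj:ℕ)).prod
              * (γ p.1 * ((List.ofFn fun m => γ (p.2 m)).drop (jj:ℕ)).prod)))) := by
      intro p
      have hsA : ∀ m, (Fin.insertNth (α := fun _ => Fin n) jj p.1 p.2) (jj.succAbove m) = p.2 m :=
        fun m => Fin.insertNth_apply_succAbove (α := fun _ => Fin n) jj p.1 p.2 m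
      have hsS : (Fin.insertNth (α := fun _ => Fin n) jj p.1 p.2) jj = p.1 := Fin.insertNth_apply_same (α := fun _ => Fin n) jj p.1 p.2
      simp only [hsA, hsS]
      have hfun := comp_insertNth' γ jj p.1 p.2
      have hPm : Pm γ (Fin.insertNth (α := fun _ => Fin n) jj p.1 p.2)
          = ((List.ofFn fun m => γ (p.2 m)).take (jj:ℕ)).prod
              * (γ p.1 * ((List.ofFn fun m => γ (p.2 m)).drop (jj:ℕ)).prod) := by
        unfold Pm
        rw [hfun, ofFn_insertNth', List.prod_append, List.prod_cons]
      rw [hPm, mul_smul]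
    calc (∑ h : Fin (k+1) → Fin n,
        ((-1:ℝ)^(jj:ℕ) * ω (fun m => h (jj.succAbove m))) • (γ (h jj) * Pm γ h))
        = ∑ p : Fin n × (Fin k → Fin n),
            ((-1:ℝ)^(jj:ℕ) * ω (fun m => (Fin.insertNth (α := fun _ => Fin n) jj p.1 p.2) (jj.succAbove m)))
              • (γ ((Fin.insertNth (α := fun _ => Fin n) jj p.1 p.2) jj) * Pm γ (Fin.insertNth (α := fun _ => Fin n) jj p.1 p.2)) := by
          rw [← Equiv.sum_comp (Fin.insertNthEquiv (fun _ => Fin n) jj)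
            (fun h => ((-1:ℝ)^(jj:ℕ) * ω (fun m => h (jj.succAbove m))) • (γ (h jj) * Pm γ h))]
          exact Finset.sum_congr rfl fun p _ => by rw [happ]
      _ = ∑ p : Fin n × (Fin k → Fin n),
            (-1:ℝ)^(jj:ℕ) • (ω p.2 • (γ p.1 *
              (((List.ofFn fun m => γ (p.2 m)).take (jj:ℕ)).prod
                * (γ p.1 * ((List.ofFn fun m => γ (p.2 m)).drop (jj:ℕ)).prod)))) :=
          Finset.sum_congr rfl fun p _ => e2 p
      _ = ∑ a : Fin n, ∑ g : Fin k → Fin n,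
            (-1:ℝ)^(jj:ℕ) • (ω g • (γ a *
              (((List.ofFn fun m => γ (g m)).take (jj:ℕ)).prod
                * (γ a * ((List.ofFn fun m => γ (g m)).drop (jj:ℕ)).prod)))) :=
          Fintype.sum_prod_type _
      _ = ∑ g : Fin k → Fin n, ∑ a : Fin n,
            (-1:ℝ)^(jj:ℕ) • (ω g • (γ a *
              (((List.ofFn fun m => γ (g m)).take (jj:ℕ)).prod
                * (γ a * ((List.ofFn fun m => γ (g m)).drop (jj:ℕ)).prod)))) :=
          Finset.sum_comm
      _ = (-1:ℝ)^(jj:ℕ) • ∑ g : Fin k → Fin n, ∑ a : Fin n,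
            (ω g • (γ a *
              (((List.ofFn fun m => γ (g m)).take (jj:ℕ)).prod
                * (γ a * ((List.ofFn fun m => γ (g m)).drop (jj:ℕ)).prod)))) := by
          rw [Finset.smul_sum]
          exact Finset.sum_congr rfl fun g _ => by rw [Finset.smul_sum]
      _ = ((-1:ℝ)^(jj:ℕ) * ((-1:ℝ)^(jj:ℕ) * (2*((jj:ℕ):ℝ) - (n:ℝ))))
            • ∑ g : Fin k → Fin n, ω g • Pm γ g := by
          rw [V_formula γ hγ hω (jj:ℕ) (by omega), smul_smul]
  rw [Finset.sum_congr rfl fun jj _ => h4 jj]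
  rw [← Finset.sum_smul]
  have hsc : ∑ jj : Fin (k+1), ((-1:ℝ)^(jj:ℕ) * ((-1:ℝ)^(jj:ℕ) * (2*((jj:ℕ):ℝ) - (n:ℝ))))
      = ((k:ℝ)+1) * ((k:ℝ) - (n:ℝ)) := by
    rw [← sum_lin n k]
    refine Finset.sum_congr rfl fun jj _ => ?_
    have hsq : (-1:ℝ)^(jj:ℕ) * (-1:ℝ)^(jj:ℕ) = 1 := by
      rw [← pow_add]
      exact Even.neg_one_pow ⟨(jj:ℕ), rfl⟩
    rw [← mul_assoc, hsq, one_mul]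
  rw [hsc, smul_smul, rho_eq, smul_smul]
  congr 1
  rw [Nat.factorial_succ]
  push_cast
  field_simp

lemma isAlt_elem {k : ℕ} (v : Fin k → Fin n) : IsAlt (elem v) := by
  intro f σ
  unfold elem
  have hm : (Matrix.of fun i j => if v i = (f ∘ σ) j then (1:ℝ) else 0)
      = (Matrix.of fun i j => if v i = f j then (1:ℝ) else 0).submatrix id σ := by
    ext i j; rfl
  rw [hm, Matrix.det_permute']

lemma IsAlt.addT {k : ℕ} {ω η : Tensor n k} (hω : IsAlt ω) (hη : IsAlt η) : IsAlt (ω + η) := by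
  intro f σ
  simp only [Pi.add_apply, hω f σ, hη f σ]
  ring

lemma IsAlt.subT {k : ℕ} {ω η : Tensor n k} (hω : IsAlt ω) (hη : IsAlt η) : IsAlt (ω - η) := by
  intro f σ
  simp only [Pi.sub_apply, hω f σ, hη f σ]
  ring

lemma IsAlt.smulT {k : ℕ} (c : ℝ) {ω : Tensor n k} (hω : IsAlt ω) : IsAlt (c • ω) := by
  intro f σ
  simp only [Pi.smul_apply, smul_eq_mul, hω f σ]
  ring

lemma isAlt_sum {k : ℕ} {ι : Type*} (s : Finset ι) (F : ι → Tensor n k)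
    (hF : ∀ x ∈ s, IsAlt (F x)) : IsAlt (∑ x ∈ s, F x) := by
  intro f σ
  simp only [Finset.sum_apply]
  rw [Finset.mul_sum]
  exact Finset.sum_congr rfl fun x hx => hF x hx f σ

lemma wedge_add {k : ℕ} (X : Fin n → ℝ) (ω η : Tensor n k) :
    wedge X (ω + η) = wedge X ω + wedge X η := by
  funext h
  simp only [wedge, Pi.add_apply, mul_add, Finset.sum_add_distrib]

lemma wedge_sub {k : ℕ} (X : Fin n → ℝ) (ω η : Tensor n k) :
    wedge X (ω - η) = wedge X ω - wedge X η := by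
  funext h
  simp only [wedge, Pi.sub_apply, mul_sub, Finset.sum_sub_distrib]

lemma wedge_single_elem {k : ℕ} (i : Fin n) (v : Fin k → Fin n) :
    wedge (Pi.single i (1:ℝ)) (elem v) = elem (Fin.cons i v) := by
  funext h
  unfold wedge elem
  rw [Matrix.det_succ_row_zero]
  refine Finset.sum_congr rfl fun j _ => ?_
  congr 1
  congr 1
  simp [Pi.single_apply, Fin.cons_zero, eq_comm]


lemma isAlt_de_wedge (a b : Fin 7) (j : Fin 3) :
    IsAlt (wedge (Pi.single a 1) (wedge (Pi.single b 1) (de j))) := by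
  fin_cases j
  · show IsAlt (wedge (Pi.single a 1) (wedge (Pi.single b 1) (de 0)))
    have hde : de 0 = elem ![2, 4] + elem ![3, 5] := rfl
    rw [hde, wedge_add, wedge_single_elem, wedge_single_elem, wedge_add,
      wedge_single_elem, wedge_single_elem]
    exact IsAlt.addT (isAlt_elem _) (isAlt_elem _)
  · show IsAlt (wedge (Pi.single a 1) (wedge (Pi.single b 1) (de 1)))
    have hde : de 1 = elem ![3, 4] - elem ![2, 5] := rfl
    rw [hde, wedge_sub, wedge_single_elem, wedge_single_elem, wedge_sub,
      wedge_single_elem, wedge_single_elem]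
    exact IsAlt.subT (isAlt_elem _) (isAlt_elem _)
  · show IsAlt (wedge (Pi.single a 1) (wedge (Pi.single b 1) (de 2)))
    have hde : de 2 = elem ![2, 3] - elem ![4, 5] := rfl
    rw [hde, wedge_sub, wedge_single_elem, wedge_single_elem, wedge_sub,
      wedge_single_elem, wedge_single_elem]
    exact IsAlt.subT (isAlt_elem _) (isAlt_elem _)

lemma isAlt_Fform (ω : Param20) : IsAlt (Fform ω) := by
  unfold Fform
  apply IsAlt.addT
  · apply isAlt_sum
    intro i _
    apply isAlt_sum
    intro j _
    exact IsAlt.smulT _ (isAlt_de_wedge (pf i).1 (pf i).2 j)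
  · exact IsAlt.smulT _ (isAlt_elem _)

lemma sum_mulVec' {m : ℕ} {ι : Type*} (s : Finset ι) (A : ι → Matrix (Fin m) (Fin m) ℝ)
    (v : Fin m → ℝ) : (∑ i ∈ s, A i) *ᵥ v = ∑ i ∈ s, A i *ᵥ v := by
  induction s using Finset.cons_induction with
  | empty => simp [Matrix.zero_mulVec]
  | cons a s ha ih => rw [Finset.sum_cons, Finset.sum_cons, Matrix.add_mulVec, ih]


/-- For fixed `(p,q)` and a nonzero spinor `Ψ ∈ Δ₇⁰`, no
`ω ∈ S(p,q,Ψ)` satisfies both `T(ω)·Ψ = 0` and `F(ω)·Ψ = 0`. -/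
theorem no_simultaneous_torsion_and_flux_constraint
    (γ : Fin 7 → Matrix (Fin 8) (Fin 8) ℝ) (hγ : CliffordRel γ)
    (p q : ℝ) (Ψ : Fin 8 → ℝ) (hΨ : InDelta0 γ Ψ) (hne : Ψ ≠ 0) :
    ¬ ∃ ω ∈ KillingSet γ p q Ψ,
        (rho γ (Tform ω)).mulVec Ψ = 0 ∧ (rho γ (Fform ω)).mulVec Ψ = 0 := by
  rintro ⟨ω, hK, hT, hF⟩
  simp only [KillingSet, Set.mem_setOf_eq] at hK
  have key : ∑ i : Fin 7, (γ i) *ᵥ ((1 / 2 : ℝ) • (gam γ (Pi.single i 1)).mulVec Ψ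
      + (1 / 4 : ℝ) • (rho γ (inter (Pi.single i 1) (Tform ω))).mulVec Ψ
      + p • (rho γ (inter (Pi.single i 1) (Fform ω))).mulVec Ψ
      + q • (rho γ (wedge (Pi.single i 1) (Fform ω))).mulVec Ψ) = 0 := by
    refine Finset.sum_eq_zero fun i _ => ?_
    have h := hK (Pi.single i 1)
    rw [h, Matrix.mulVec_zero]
  have expand : ∀ i : Fin 7, (γ i) *ᵥ ((1 / 2 : ℝ) • (gam γ (Pi.single i 1)).mulVec Ψ
      + (1 / 4 : ℝ) • (rho γ (inter (Pi.single i 1) (Tform ω))).mulVec Ψ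
      + p • (rho γ (inter (Pi.single i 1) (Fform ω))).mulVec Ψ
      + q • (rho γ (wedge (Pi.single i 1) (Fform ω))).mulVec Ψ)
      = (1 / 2 : ℝ) • ((γ i * gam γ (Pi.single i 1)) *ᵥ Ψ)
        + (1 / 4 : ℝ) • ((γ i * rho γ (inter (Pi.single i 1) (Tform ω))) *ᵥ Ψ)
        + p • ((γ i * rho γ (inter (Pi.single i 1) (Fform ω))) *ᵥ Ψ)
        + q • ((γ i * rho γ (wedge (Pi.single i 1) (Fform ω))) *ᵥ Ψ) := by
    intro i
    rw [Matrix.mulVec_add, Matrix.mulVec_add, Matrix.mulVec_add]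
    rw [Matrix.mulVec_smul, Matrix.mulVec_smul, Matrix.mulVec_smul, Matrix.mulVec_smul]
    rw [Matrix.mulVec_mulVec, Matrix.mulVec_mulVec, Matrix.mulVec_mulVec, Matrix.mulVec_mulVec]
  rw [Finset.sum_congr rfl fun i _ => expand i] at key
  rw [Finset.sum_add_distrib, Finset.sum_add_distrib, Finset.sum_add_distrib] at key
  rw [← Finset.smul_sum, ← Finset.smul_sum, ← Finset.smul_sum, ← Finset.smul_sum] at key
  rw [← sum_mulVec', ← sum_mulVec', ← sum_mulVec', ← sum_mulVec'] at key
  have hgam : ∑ i : Fin 7, γ i * gam γ (Pi.single i 1) = (-(7:ℝ)) • 1 := by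
    have h1 : ∀ i : Fin 7, γ i * gam γ (Pi.single i 1) = (-1:ℝ) • 1 := by
      intro i
      rw [gam_single, gam_sq γ hγ]
    simp only [h1]
    rw [Finset.sum_const, Finset.card_univ, Fintype.card_fin, ← Nat.cast_smul_eq_nsmul ℝ,
      smul_smul]
    norm_num
  have hTterm := sum_gam_mul_rho_inter γ (Tform ω)
  have hFiterm := sum_gam_mul_rho_inter γ (Fform ω)
  have hFwterm := sum_gam_mul_rho_wedge γ hγ (isAlt_Fform ω)
  rw [hgam, hTterm, hFiterm, hFwterm] at key
  rw [Matrix.smul_mulVec, Matrix.smul_mulVec, Matrix.smul_mulVec,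
    Matrix.smul_mulVec] at key
  rw [hT, hF, Matrix.one_mulVec] at key
  simp only [smul_zero, add_zero, smul_smul] at key
  have hΨ0 : Ψ = 0 := by
    have h2 : ((1:ℝ)/2 * -7) ≠ 0 := by norm_num
    exact (smul_eq_zero.mp key).resolve_left h2
  exact hne hΨ0
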